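/- Let E₂ be the elliptic curve given by 2y² = x³ − 22x² + 21x + 1 over ℚ. Then the points (1/2, 7/4) and (1/8, 41/32) lie on E₂ and generate a free subgroup of rank 2; in particular rk E₂(ℚ) ≥ 2. -/

import Mathlib

namespace S15

open Polynomial in
lemma no_rat_root (x : ℚ) : x ^ 3 - 44 * x ^ 2 + 84 * x + 8 ≠ 0 := by
  intro h
  have hint : IsIntegral ℤ x := by
    refine ⟨X ^ 3 + C (-44) * X ^ 2 + C 84 * X + C 8, by monicity!, ?_⟩
    simp only [eval₂_add, eval₂_mul, eval₂_pow, eval₂_X, eval₂_C]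
    simp only [algebraMap_int_eq, eq_intCast]
    push_cast
    linear_combination h
  obtain ⟨n, rfl⟩ := IsIntegrallyClosed.isIntegral_iff.mp hint
  have hn : n ^ 3 - 44 * n ^ 2 + 84 * n + 8 = 0 := by
    have h' : (n : ℚ) ^ 3 - 44 * (n : ℚ) ^ 2 + 84 * (n : ℚ) + 8 = 0 := by simpa using h
    exact_mod_cast h'
  have hdvd : n ∣ 8 := ⟨-(n ^ 2 - 44 * n + 84), by linear_combination hn⟩
  have hb2 : n ≤ 8 := Int.le_of_dvd (by norm_num) hdvd
  have hb1 : -n ≤ 8 := Int.le_of_dvd (by norm_num) ((neg_dvd).mpr hdvd)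
  have hb1' : -8 ≤ n := by omega
  interval_cases n <;> omega


open Polynomial PadicInt

lemma toZMod_eq_of_dvd {p : ℕ} [Fact p.Prime] (x : ℤ_[p]) (n : ℤ)
    (h : (p : ℤ_[p]) ∣ (x - n)) : PadicInt.toZMod x = (n : ZMod p) := by
  have hk : x - (n : ℤ_[p]) ∈ RingHom.ker (toZMod (p := p)) := by
    rw [ker_toZMod, maximalIdeal_eq_span_p]
    exact Ideal.mem_span_singleton.mpr h
  have := RingHom.mem_ker.mp hk
  rw [map_sub, sub_eq_zero] at this
  simpa using this

lemma padicRoot (p : ℕ) [Fact p.Prime] (a : ℤ)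
    (h1 : (p : ℤ) ∣ (a ^ 3 - 44 * a ^ 2 + 84 * a + 8))
    (h2 : ¬ (p : ℤ) ∣ (3 * a ^ 2 - 88 * a + 84)) :
    ∃ z : ℤ_[p], z ^ 3 - 44 * z ^ 2 + 84 * z + 8 = 0 ∧
      PadicInt.toZMod z = (a : ZMod p) := by
  set F : Polynomial ℤ_[p] := X ^ 3 + C (-44) * X ^ 2 + C 84 * X + C 8 with hF
  have hFa : F.eval (a : ℤ_[p]) = ((a ^ 3 - 44 * a ^ 2 + 84 * a + 8 : ℤ) : ℤ_[p]) := by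
    simp [hF]; push_cast; ring
  have hFd : F.derivative = C 3 * X ^ 2 + C (-88) * X + C 84 := by
    rw [hF]; simp [derivative_pow]; rw [← mul_assoc, ← C_mul]; norm_num
  have hFda : F.derivative.eval (a : ℤ_[p]) = ((3 * a ^ 2 - 88 * a + 84 : ℤ) : ℤ_[p]) := by
    rw [hFd]; simp; push_cast; ring
  have hda : ‖F.derivative.eval (a : ℤ_[p])‖ = 1 := by
    rw [hFda]
    refine le_antisymm (norm_le_one _) ?_
    by_contra hlt
    push_neg at hlt
    exact h2 ((norm_int_lt_one_iff_dvd _).mp (by simpa using hlt))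
  have hnorm : ‖F.eval (a : ℤ_[p])‖ < ‖F.derivative.eval (a : ℤ_[p])‖ ^ 2 := by
    rw [hda, hFa, one_pow]
    exact (norm_int_lt_one_iff_dvd _).mpr h1
  obtain ⟨z, hz0, hz1, -, -⟩ := hensels_lemma hnorm
  refine ⟨z, ?_, ?_⟩
  · have : F.eval z = 0 := hz0
    rw [hF] at this
    simp at this
    linear_combination this
  · apply toZMod_eq_of_dvd
    rw [coe_aeval_eq_eval, hda] at hz1
    exact (norm_lt_one_iff_dvd _).mp hz1

lemma no_sq (p : ℕ) [Fact p.Prime] (c : ℤ_[p])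
    (hc : ¬ IsSquare (PadicInt.toZMod c)) (t : ℚ_[p]) : t ^ 2 ≠ (c : ℚ_[p]) := by
  intro ht
  have hc1 : ‖c‖ = 1 := by
    refine le_antisymm (norm_le_one _) ?_
    by_contra hlt
    push_neg at hlt
    have : (p : ℤ_[p]) ∣ c := (norm_lt_one_iff_dvd _).mp (by simpa using hlt)
    have h0 : PadicInt.toZMod c = 0 := by
      obtain ⟨d, rfl⟩ := this
      simp [toZMod_eq_of_dvd]
    exact hc (h0 ▸ ⟨0, by simp⟩)
  have htn : ‖t‖ = 1 := by
    have h2 : ‖t‖ ^ 2 = 1 := by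
      rw [← _root_.norm_pow, ht, padic_norm_e_of_padicInt, hc1]
    nlinarith [norm_nonneg t]
  have htle : ‖t‖ ≤ 1 := le_of_eq htn
  set t' : ℤ_[p] := ⟨t, htle⟩ with ht'
  have : t' ^ 2 = c := by
    apply Subtype.ext
    push_cast [ht']
    exact ht
  exact hc ⟨PadicInt.toZMod t', by rw [← this]; simp [pow_two]⟩


lemma key_secant {K : Type*} [CommRing K] (θ x₁ y₁ x₂ y₂ l : K)
    (hθ : θ ^ 3 - 44 * θ ^ 2 + 84 * θ + 8 = 0)
    (h₁ : y₁ ^ 2 = x₁ ^ 3 - 44 * x₁ ^ 2 + 84 * x₁ + 8)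
    (h₂ : y₂ ^ 2 = x₂ ^ 3 - 44 * x₂ ^ 2 + 84 * x₂ + 8)
    (hl : l * (x₁ - x₂) = y₁ - y₂) :
    (x₁ - x₂) * ((x₁ - θ) * ((x₂ - θ) * ((l ^ 2 + 44 - x₁ - x₂) - θ)) -
      (l * θ + (y₁ - l * x₁)) ^ 2) = 0 := by
  linear_combination (x₂ - x₁) * hθ + (x₂ - θ) * h₁ - (x₁ - θ) * h₂ +
    (x₁ - θ) * (l * x₂ + y₁ - l * x₁ + y₂) * hl

lemma key_tangent {K : Type*} [CommRing K] (θ x₁ y₁ l : K)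
    (hθ : θ ^ 3 - 44 * θ ^ 2 + 84 * θ + 8 = 0)
    (h₁ : y₁ ^ 2 = x₁ ^ 3 - 44 * x₁ ^ 2 + 84 * x₁ + 8)
    (hl : l * (2 * y₁) = 3 * x₁ ^ 2 - 88 * x₁ + 84) :
    (x₁ - θ) * ((x₁ - θ) * ((l ^ 2 + 44 - x₁ - x₁) - θ)) -
      (l * θ + (y₁ - l * x₁)) ^ 2 = 0 := by
  linear_combination (-1 : K) * hθ - h₁ - (θ - x₁) * hl

instance f11 : Fact (Nat.Prime 11) := ⟨by norm_num⟩
instance f19 : Fact (Nat.Prime 19) := ⟨by norm_num⟩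

abbrev K : Type := ℚ_[11] × ℚ_[19]

def Wc : WeierstrassCurve.Affine ℚ :=
  { a₁ := 0, a₂ := -44, a₃ := 0, a₄ := 84, a₆ := 8 }

lemma eq_y {x y : ℚ} (h : Wc.Equation x y) :
    y ^ 2 = x ^ 3 - 44 * x ^ 2 + 84 * x + 8 := by
  have := (Wc.equation_iff x y).mp h
  simp only [Wc] at this
  linarith [this]

lemma y_ne {x y : ℚ} (h : Wc.Equation x y) : y ≠ 0 := by
  intro h0
  exact no_rat_root x (by rw [← eq_y h, h0]; ring)

lemma fst_alg (q : ℚ) : (algebraMap ℚ K q).1 = (q : ℚ_[11]) :=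
  eq_ratCast ((RingHom.fst _ _).comp (algebraMap ℚ K)) q

lemma snd_alg (q : ℚ) : (algebraMap ℚ K q).2 = (q : ℚ_[19]) :=
  eq_ratCast ((RingHom.snd _ _).comp (algebraMap ℚ K)) q

lemma ne1 (θ : K) (hθ : θ ^ 3 - 44 * θ ^ 2 + 84 * θ + 8 = 0) (x : ℚ) :
    (x : ℚ_[11]) - θ.1 ≠ 0 := by
  intro h0
  have hθ1 : θ.1 = (x : ℚ_[11]) := by linear_combination -h0
  have hc := congrArg Prod.fst hθ
  simp only [Prod.pow_fst, Prod.fst_mul, Prod.fst_sub, Prod.fst_add, Prod.fst_ofNat,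
    Prod.fst_zero, hθ1] at hc
  have hq : ((x ^ 3 - 44 * x ^ 2 + 84 * x + 8 : ℚ) : ℚ_[11]) = 0 := by
    push_cast
    linear_combination hc
  exact no_rat_root x (by exact_mod_cast hq)

lemma ne2 (θ : K) (hθ : θ ^ 3 - 44 * θ ^ 2 + 84 * θ + 8 = 0) (x : ℚ) :
    (x : ℚ_[19]) - θ.2 ≠ 0 := by
  intro h0
  have hθ1 : θ.2 = (x : ℚ_[19]) := by linear_combination -h0
  have hc := congrArg Prod.snd hθ
  simp only [Prod.pow_snd, Prod.snd_mul, Prod.snd_sub, Prod.snd_add, Prod.snd_ofNat,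
    Prod.snd_zero, hθ1] at hc
  have hq : ((x ^ 3 - 44 * x ^ 2 + 84 * x + 8 : ℚ) : ℚ_[19]) = 0 := by
    push_cast
    linear_combination hc
  exact no_rat_root x (by exact_mod_cast hq)

lemma isUnit_xmθ (θ : K) (hθ : θ ^ 3 - 44 * θ ^ 2 + 84 * θ + 8 = 0) (x : ℚ) :
    IsUnit (algebraMap ℚ K x - θ) := by
  rw [isUnit_iff_exists_inv]
  refine ⟨(((x : ℚ_[11]) - θ.1)⁻¹, ((x : ℚ_[19]) - θ.2)⁻¹), ?_⟩
  have h1 := ne1 θ hθ x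
  have h2 := ne2 θ hθ x
  apply Prod.ext
  · simp [Prod.fst_mul, fst_alg]
    field_simp
  · simp [Prod.snd_mul, snd_alg]
    field_simp

/-- The subgroup of squares of `Kˣ`. -/
noncomputable def H : Subgroup Kˣ := (powMonoidHom 2 : Kˣ →* Kˣ).range

instance : (H).Normal := H.normal_of_comm

/-- The target group `Kˣ` modulo squares. -/
abbrev QG := Kˣ ⧸ H

noncomputable instance : CommGroup QG := QuotientGroup.Quotient.commGroup H

/-- The descent map. -/
noncomputable def phi (θ : K) (hθ : θ ^ 3 - 44 * θ ^ 2 + 84 * θ + 8 = 0) :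
    Wc.Point → QG
  | 0 => 1
  | @WeierstrassCurve.Affine.Point.some _ _ _ x _ _ =>
      QuotientGroup.mk (isUnit_xmθ θ hθ x).unit

lemma phi_zero (θ : K) (hθ) : phi θ hθ 0 = 1 := rfl

lemma phi_some (θ : K) (hθ) {x y : ℚ} (h : Wc.Nonsingular x y) :
    phi θ hθ (WeierstrassCurve.Affine.Point.some _ _ h) =
      QuotientGroup.mk (isUnit_xmθ θ hθ x).unit := rfl

lemma sq_mem (u : Kˣ) : u ^ 2 ∈ H := ⟨u, rfl⟩

lemma mk_sq (u : Kˣ) : (QuotientGroup.mk (u ^ 2) : QG) = 1 :=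
  (QuotientGroup.eq_one_iff _).mpr (sq_mem u)


namespace S15x
open WeierstrassCurve.Affine WeierstrassCurve.Affine.Point
open S15

lemma isUnit_rat (q : ℚ) (hq : q ≠ 0) : IsUnit (algebraMap ℚ K q) :=
  isUnit_iff_exists_inv.mpr ⟨algebraMap ℚ K q⁻¹,
    by rw [← map_mul, mul_inv_cancel₀ hq, map_one]⟩

lemma addX_eq (x₁ x₂ l : ℚ) : Wc.addX x₁ x₂ l = l ^ 2 + 44 - x₁ - x₂ := by
  simp [WeierstrassCurve.Affine.addX, Wc]

lemma negY_eq (x y : ℚ) : Wc.negY x y = -y := by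
  simp [WeierstrassCurve.Affine.negY, Wc]

set_option maxHeartbeats 1000000 in
lemma phi_add (θ : K) (hθ : θ ^ 3 - 44 * θ ^ 2 + 84 * θ + 8 = 0) (P R : Wc.Point) :
    phi θ hθ (P + R) = phi θ hθ P * phi θ hθ R := by
  have ξ := algebraMap ℚ K
  cases P with
  | zero =>
      rw [show (zero : Wc.Point) = 0 from rfl, zero_add, phi_zero, one_mul]
  | @some x₁ y₁ h₁ =>
    cases R with
    | zero =>
        rw [show (zero : Wc.Point) = 0 from rfl, add_zero, phi_zero, mul_one]
    | @some x₂ y₂ h₂ =>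
      by_cases hc : x₁ = x₂ ∧ y₁ = Wc.negY x₂ y₂
      · obtain ⟨hx, hy⟩ := hc
        rw [add_of_Y_eq hx hy, phi_zero, phi_some, phi_some]
        subst hx
        rw [← QuotientGroup.mk_mul, ← pow_two]
        exact (mk_sq _).symm
      · have hxy : x₁ = x₂ → y₁ ≠ Wc.negY x₂ y₂ := fun hx hy => hc ⟨hx, hy⟩
        rw [add_some (fun h => hxy h.1 h.2), phi_some, phi_some, phi_some]
        set l := Wc.slope x₁ x₂ y₁ y₂ with hldef
        set x₃ := Wc.addX x₁ x₂ l with hx₃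
        set w : K := algebraMap ℚ K l * θ + algebraMap ℚ K (y₁ - l * x₁) with hw
        have hex3 : algebraMap ℚ K x₃ =
            (algebraMap ℚ K l) ^ 2 + 44 - algebraMap ℚ K x₁ - algebraMap ℚ K x₂ := by
          rw [hx₃, addX_eq]
          push_cast [map_add, map_sub, map_pow, map_ofNat]
          ring
        have H1 : (algebraMap ℚ K y₁) ^ 2 = (algebraMap ℚ K x₁) ^ 3 -
            44 * (algebraMap ℚ K x₁) ^ 2 + 84 * (algebraMap ℚ K x₁) + 8 := by
          have := congrArg (algebraMap ℚ K) (eq_y h₁.left)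
          push_cast [map_add, map_sub, map_mul, map_pow, map_ofNat] at this
          exact this
        have H2 : (algebraMap ℚ K y₂) ^ 2 = (algebraMap ℚ K x₂) ^ 3 -
            44 * (algebraMap ℚ K x₂) ^ 2 + 84 * (algebraMap ℚ K x₂) + 8 := by
          have := congrArg (algebraMap ℚ K) (eq_y h₂.left)
          push_cast [map_add, map_sub, map_mul, map_pow, map_ofNat] at this
          exact this
        have V : (algebraMap ℚ K x₁ - θ) * ((algebraMap ℚ K x₂ - θ) *
            (algebraMap ℚ K x₃ - θ)) = w ^ 2 := by
          by_cases hx : x₁ = x₂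
          · -- tangent case
            subst hx
            have hy2 : y₁ = y₂ := by
              have hsq : y₁ ^ 2 = y₂ ^ 2 := by rw [eq_y h₁.left, eq_y h₂.left]
              have h0 : (y₁ - y₂) * (y₁ + y₂) = 0 := by linear_combination hsq
              rcases mul_eq_zero.mp h0 with h | h
              · linarith
              · exact absurd (by rw [negY_eq]; linarith) (hxy rfl)
            subst hy2
            have hyne : y₁ ≠ 0 := y_ne h₁.left
            have hl : l * (2 * y₁) = 3 * x₁ ^ 2 - 88 * x₁ + 84 := by
              rw [hldef, slope_of_Y_ne rfl (hxy rfl)]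
              rw [negY_eq]
              show (3 * x₁ ^ 2 + 2 * Wc.a₂ * x₁ + Wc.a₄ - Wc.a₁ * y₁) / (y₁ - -y₁) * (2 * y₁) =
                3 * x₁ ^ 2 - 88 * x₁ + 84
              simp only [Wc]
              rw [div_mul_eq_mul_div, div_eq_iff (by intro hh; exact hyne (by linarith))]
              ring
            have Hl : algebraMap ℚ K l * (2 * algebraMap ℚ K y₁) =
                3 * (algebraMap ℚ K x₁) ^ 2 - 88 * algebraMap ℚ K x₁ + 84 := by
              have := congrArg (algebraMap ℚ K) hl
              push_cast [map_mul, map_sub, map_add, map_pow, map_ofNat] at this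
              exact this
            have key := key_tangent θ (algebraMap ℚ K x₁) (algebraMap ℚ K y₁)
              (algebraMap ℚ K l) hθ H1 Hl
            rw [hex3, hw]
            have hymlx : algebraMap ℚ K (y₁ - l * x₁) =
                algebraMap ℚ K y₁ - algebraMap ℚ K l * algebraMap ℚ K x₁ := by
              push_cast [map_sub, map_mul]; ring
            rw [hymlx]
            linear_combination key
          · -- secant case
            have hl : l * (x₁ - x₂) = y₁ - y₂ := by
              rw [hldef, slope_of_X_ne hx]
              exact div_mul_cancel₀ _ (sub_ne_zero.mpr hx)
            have Hl : algebraMap ℚ K l * (algebraMap ℚ K x₁ - algebraMap ℚ K x₂) =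
                algebraMap ℚ K y₁ - algebraMap ℚ K y₂ := by
              have := congrArg (algebraMap ℚ K) hl
              push_cast [map_mul, map_sub] at this
              exact this
            have key := key_secant θ (algebraMap ℚ K x₁) (algebraMap ℚ K y₁)
              (algebraMap ℚ K x₂) (algebraMap ℚ K y₂) (algebraMap ℚ K l) hθ H1 H2 Hl
            have hd : IsUnit (algebraMap ℚ K x₁ - algebraMap ℚ K x₂) := by
              rw [← map_sub]
              exact isUnit_rat _ (sub_ne_zero.mpr hx)
            have hbig : (algebraMap ℚ K x₁ - θ) * ((algebraMap ℚ K x₂ - θ) *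
                (((algebraMap ℚ K l) ^ 2 + 44 - algebraMap ℚ K x₁ - algebraMap ℚ K x₂) - θ)) -
                (algebraMap ℚ K l * θ + (algebraMap ℚ K y₁ -
                  algebraMap ℚ K l * algebraMap ℚ K x₁)) ^ 2 = 0 := by
              apply hd.mul_left_cancel
              rw [mul_zero]
              exact key
            rw [hex3, hw]
            have hymlx : algebraMap ℚ K (y₁ - l * x₁) =
                algebraMap ℚ K y₁ - algebraMap ℚ K l * algebraMap ℚ K x₁ := by
              push_cast [map_sub, map_mul]; ring
            rw [hymlx]
            linear_combination hbig
        -- conclude in the quotient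
        have hu3 : IsUnit (algebraMap ℚ K x₃ - θ) := isUnit_xmθ θ hθ x₃
        have hwu : IsUnit w := by
          have : IsUnit (w ^ 2) := by
            rw [← V]
            exact ((isUnit_xmθ θ hθ x₁).mul ((isUnit_xmθ θ hθ x₂).mul hu3))
          exact (isUnit_pow_iff (two_ne_zero)).mp this
        have U : (isUnit_xmθ θ hθ x₁).unit * (isUnit_xmθ θ hθ x₂).unit *
            (isUnit_xmθ θ hθ x₃).unit = hwu.unit ^ 2 := by
          apply Units.ext
          push_cast [Units.val_mul, IsUnit.unit_spec]
          rw [mul_assoc]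
          rw [V]
        have hU : ((QuotientGroup.mk ((isUnit_xmθ θ hθ x₁).unit) : QG) *
            QuotientGroup.mk ((isUnit_xmθ θ hθ x₂).unit)) *
            QuotientGroup.mk ((isUnit_xmθ θ hθ x₃).unit) = 1 := by
          rw [← QuotientGroup.mk_mul, ← QuotientGroup.mk_mul, U]
          exact mk_sq _
        have h3 : (QuotientGroup.mk ((isUnit_xmθ θ hθ x₃).unit) : QG) *
            QuotientGroup.mk ((isUnit_xmθ θ hθ x₃).unit) = 1 := by
          rw [← QuotientGroup.mk_mul, ← pow_two]
          exact mk_sq _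
        have hinv := inv_eq_of_mul_eq_one_right h3
        rw [← hinv]
        exact (eq_inv_of_mul_eq_one_left hU).symm


noncomputable def Phi (θ : K) (hθ : θ ^ 3 - 44 * θ ^ 2 + 84 * θ + 8 = 0) :
    Wc.Point →+ Additive QG :=
  AddMonoidHom.mk' (fun P => Additive.ofMul (phi θ hθ P))
    (fun P R => by
      show Additive.ofMul (phi θ hθ (P + R)) = _
      rw [phi_add, ofMul_mul])

lemma mul_self_qg (g : QG) : g * g = 1 := by
  refine QuotientGroup.induction_on g fun u => ?_
  rw [← QuotientGroup.mk_mul, ← pow_two]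
  exact mk_sq u

lemma zsmul_parity (q : Additive QG) (m : ℤ) : m • q = (m % 2) • q := by
  have h2 : (2 : ℤ) • q = 0 := by
    rw [two_zsmul]
    exact mul_self_qg q.toMul
  calc m • q = (2 * (m / 2) + m % 2) • q := by rw [Int.mul_ediv_add_emod]
    _ = (m / 2) • ((2 : ℤ) • q) + (m % 2) • q := by
        rw [add_zsmul, mul_comm, mul_zsmul]
    _ = (m % 2) • q := by rw [h2, smul_zero, zero_add]

open WeierstrassCurve.Affine WeierstrassCurve.Affine.Point in
lemma descent (θ : K) (hθ : θ ^ 3 - 44 * θ ^ 2 + 84 * θ + 8 = 0)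
    {x₁ y₁ x₂ y₂ : ℚ} (h₁ : Wc.Nonsingular x₁ y₁) (h₂ : Wc.Nonsingular x₂ y₂)
    (NS1 : ∀ s : Kˣ, ((s : Kˣ) : K) ^ 2 ≠ algebraMap ℚ K x₁ - θ)
    (NS2 : ∀ s : Kˣ, ((s : Kˣ) : K) ^ 2 ≠ algebraMap ℚ K x₂ - θ)
    (NS3 : ∀ s : Kˣ, ((s : Kˣ) : K) ^ 2 ≠
      (algebraMap ℚ K x₁ - θ) * (algebraMap ℚ K x₂ - θ)) :
    ∀ m n : ℤ, m • (some _ _ h₁ : Wc.Point) + n • (some _ _ h₂ : Wc.Point) = 0 →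
      m = 0 ∧ n = 0 := by
  set P : Wc.Point := some _ _ h₁ with hP
  set Q : Wc.Point := some _ _ h₂ with hQ
  suffices hind : ∀ N : ℕ, ∀ m n : ℤ, m.natAbs + n.natAbs ≤ N →
      m • P + n • Q = 0 → m = 0 ∧ n = 0 by
    exact fun m n h => hind (m.natAbs + n.natAbs) m n le_rfl h
  intro N
  induction N with
  | zero => intro m n hb _; omega
  | succ N ih =>
    intro m n hb hrel
    -- parity step
    have hpar : (m % 2) • (Phi θ hθ P) + (n % 2) • (Phi θ hθ Q) = 0 := by
      rw [← zsmul_parity, ← zsmul_parity, ← _root_.map_zsmul, ← _root_.map_zsmul,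
        ← _root_.map_add, hrel, _root_.map_zero]
    have hPP : Phi θ hθ P = Additive.ofMul
        (QuotientGroup.mk (isUnit_xmθ θ hθ x₁).unit : QG) := rfl
    have hPQ : Phi θ hθ Q = Additive.ofMul
        (QuotientGroup.mk (isUnit_xmθ θ hθ x₂).unit : QG) := rfl
    have sq_of : ∀ u : Kˣ, (QuotientGroup.mk u : QG) = 1 → ∃ s : Kˣ,
        ((s : Kˣ) : K) ^ 2 = (u : K) := by
      intro u hu
      obtain ⟨s, hs⟩ := (QuotientGroup.eq_one_iff u).mp hu
      refine ⟨s, ?_⟩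
      have := congrArg (Units.val) hs
      simpa [powMonoidHom_apply, Units.val_pow_eq_pow_val] using this
    have hm2 : m % 2 = 0 ∧ n % 2 = 0 := by
      rcases Int.emod_two_eq_zero_or_one m with hm | hm <;>
        rcases Int.emod_two_eq_zero_or_one n with hn | hn
      · exact ⟨hm, hn⟩
      · -- m even, n odd : NS2
        exfalso
        rw [hm, hn, zero_zsmul, one_zsmul, zero_add, hPQ] at hpar
        have h1 : (QuotientGroup.mk (isUnit_xmθ θ hθ x₂).unit : QG) = 1 := by
          have := congrArg Additive.toMul hpar
          simpa using this
        obtain ⟨s, hs⟩ := sq_of _ h1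
        rw [IsUnit.unit_spec] at hs
        exact NS2 s hs
      · -- m odd, n even : NS1
        exfalso
        rw [hm, hn, zero_zsmul, one_zsmul, add_zero, hPP] at hpar
        have h1 : (QuotientGroup.mk (isUnit_xmθ θ hθ x₁).unit : QG) = 1 := by
          have := congrArg Additive.toMul hpar
          simpa using this
        obtain ⟨s, hs⟩ := sq_of _ h1
        rw [IsUnit.unit_spec] at hs
        exact NS1 s hs
      · -- both odd : NS3
        exfalso
        rw [hm, hn, one_zsmul, one_zsmul, hPP, hPQ] at hpar
        have h1 : (QuotientGroup.mk ((isUnit_xmθ θ hθ x₁).unit *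
            (isUnit_xmθ θ hθ x₂).unit) : QG) = 1 := by
          rw [QuotientGroup.mk_mul]
          have := congrArg Additive.toMul hpar
          simpa using this
        obtain ⟨s, hs⟩ := sq_of _ h1
        rw [Units.val_mul, IsUnit.unit_spec, IsUnit.unit_spec] at hs
        exact NS3 s hs
    obtain ⟨hm2', hn2'⟩ := hm2
    set m' := m / 2 with hm'd
    set n' := n / 2 with hn'd
    have hm' : m = 2 * m' := by omega
    have hn' : n = 2 * n' := by omega
    have hR2 : (m' • P + n' • Q) + (m' • P + n' • Q) = 0 := by
      have hsplit : m • P + n • Q = (m' • P + n' • Q) + (m' • P + n' • Q) := by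
        rw [hm', hn', mul_zsmul, mul_zsmul, two_zsmul, two_zsmul]
        abel
      rw [hsplit] at hrel
      exact hrel
    have hR0 : m' • P + n' • Q = 0 := by
      set R : Wc.Point := m' • P + n' • Q with hRdef
      cases hR : R with
      | zero => rfl
      | @some xr yr hr =>
        exfalso
        rw [hR] at hR2
        by_cases hy : yr = Wc.negY xr yr
        · have : yr = 0 := by
            rw [negY_eq] at hy
            linarith
          exact y_ne hr.left this
        · have := add_some (W := Wc) (h₁ := hr) (h₂ := hr) (fun h => hy h.2)
          rw [this] at hR2
          exact some_ne_zero _ hR2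
    have hbound : m'.natAbs + n'.natAbs ≤ N := by
      have e1 : m.natAbs = 2 * m'.natAbs := by
        rw [hm', Int.natAbs_mul]
        rfl
      have e2 : n.natAbs = 2 * n'.natAbs := by
        rw [hn', Int.natAbs_mul]
        rfl
      omega
    obtain ⟨hm0, hn0⟩ := ih m' n' hbound hR0
    omega

end S15x
end S15

/-- The points `(1/2, 7/4)` and `(1/8, 41/32)` lie on the twisted curve
`E₂ : 2y² = x³ − 22x² + 21x + 1` over `ℚ`, and generate a free subgroup of rank `2` of
`E₂(ℚ)`; in particular `rk E₂(ℚ) ≥ 2`. Here `E₂(ℚ)` is computed on the Weierstrass model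
`Y² = X³ − 44X² + 84X + 8` of `E₂`, on which a point `(x, y)` of `E₂` corresponds to
`(2x, 4y)`. -/
theorem stmt_15 (W : WeierstrassCurve.Affine ℚ)
    (hW : W = { a₁ := 0, a₂ := -44, a₃ := 0, a₄ := 84, a₆ := 8 }) :
    2 * (7 / 4 : ℚ) ^ 2 = (1 / 2) ^ 3 - 22 * (1 / 2) ^ 2 + 21 * (1 / 2) + 1 ∧
    2 * (41 / 32 : ℚ) ^ 2 = (1 / 8) ^ 3 - 22 * (1 / 8) ^ 2 + 21 * (1 / 8) + 1 ∧
    W.Equation (2 * (1 / 2)) (4 * (7 / 4)) ∧ W.Equation (2 * (1 / 8)) (4 * (41 / 32)) ∧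
      ∃ (h₁ : W.Nonsingular (2 * (1 / 2)) (4 * (7 / 4)))
        (h₂ : W.Nonsingular (2 * (1 / 8)) (4 * (41 / 32))),
        Function.Injective (fun v : ℤ × ℤ =>
          v.1 • (WeierstrassCurve.Affine.Point.some _ _ h₁ : W.Point) +
            v.2 • (WeierstrassCurve.Affine.Point.some _ _ h₂ : W.Point)) := by
  have hWc : ({ a₁ := 0, a₂ := -44, a₃ := 0, a₄ := 84, a₆ := 8 } :
      WeierstrassCurve.Affine ℚ) = S15.Wc := rfl
  rw [hWc] at hW
  subst hW
  have hE1 : S15.Wc.Equation (2 * (1 / 2)) (4 * (7 / 4)) := by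
    rw [WeierstrassCurve.Affine.equation_iff]
    norm_num [S15.Wc]
  have hE2 : S15.Wc.Equation (2 * (1 / 8)) (4 * (41 / 32)) := by
    rw [WeierstrassCurve.Affine.equation_iff]
    norm_num [S15.Wc]
  have h₁ : S15.Wc.Nonsingular (2 * (1 / 2)) (4 * (7 / 4)) := by
    rw [WeierstrassCurve.Affine.nonsingular_iff]
    exact ⟨hE1, Or.inr (by norm_num [S15.Wc])⟩
  have h₂ : S15.Wc.Nonsingular (2 * (1 / 8)) (4 * (41 / 32)) := by
    rw [WeierstrassCurve.Affine.nonsingular_iff]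
    exact ⟨hE2, Or.inr (by norm_num [S15.Wc])⟩
  refine ⟨by norm_num, by norm_num, hE1, hE2, h₁, h₂, ?_⟩
  -- construct the p-adic roots
  obtain ⟨z₁, hz₁, hz₁m⟩ := S15.padicRoot 11 10 (by decide) (by decide)
  obtain ⟨z₂, hz₂, hz₂m⟩ := S15.padicRoot 19 9 (by decide) (by decide)
  set θ : S15.K := ((z₁ : ℚ_[11]), (z₂ : ℚ_[19])) with hθdef
  have c1 : (z₁ : ℚ_[11]) ^ 3 - 44 * (z₁ : ℚ_[11]) ^ 2 + 84 * (z₁ : ℚ_[11]) + 8 = 0 := by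
    exact_mod_cast congrArg (fun t : ℤ_[11] => (t : ℚ_[11])) hz₁
  have c2 : (z₂ : ℚ_[19]) ^ 3 - 44 * (z₂ : ℚ_[19]) ^ 2 + 84 * (z₂ : ℚ_[19]) + 8 = 0 := by
    exact_mod_cast congrArg (fun t : ℤ_[19] => (t : ℚ_[19])) hz₂
  have hθ : θ ^ 3 - 44 * θ ^ 2 + 84 * θ + 8 = 0 := by
    have e1 : (θ ^ 3 - 44 * θ ^ 2 + 84 * θ + 8).1 = (0 : S15.K).1 := by
      simp only [Prod.pow_fst, Prod.fst_mul, Prod.fst_sub, Prod.fst_add, Prod.fst_ofNat,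
        Prod.fst_zero, hθdef]
      exact c1
    have e2 : (θ ^ 3 - 44 * θ ^ 2 + 84 * θ + 8).2 = (0 : S15.K).2 := by
      simp only [Prod.pow_snd, Prod.snd_mul, Prod.snd_sub, Prod.snd_add, Prod.snd_ofNat,
        Prod.snd_zero, hθdef]
      exact c2
    exact Prod.ext e1 e2
  have NS1 : ∀ s : S15.Kˣ, ((s : S15.Kˣ) : S15.K) ^ 2 ≠
      algebraMap ℚ S15.K (2 * (1 / 2)) - θ := by
    intro s hs
    have hcmp := congrArg Prod.fst hs
    simp only [Prod.pow_fst, Prod.fst_sub, S15.fst_alg, hθdef] at hcmp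
    have h1' : ((s : S15.K).1) ^ 2 = ((1 - z₁ : ℤ_[11]) : ℚ_[11]) := by
      push_cast at hcmp ⊢
      rw [hcmp]; norm_num
    exact S15.no_sq 11 (1 - z₁)
      (by rw [map_sub, map_one, hz₁m]; decide) _ h1'
  have NS2 : ∀ s : S15.Kˣ, ((s : S15.Kˣ) : S15.K) ^ 2 ≠
      algebraMap ℚ S15.K (2 * (1 / 8)) - θ := by
    intro s hs
    have hcmp := congrArg Prod.snd hs
    simp only [Prod.pow_snd, Prod.snd_sub, S15.snd_alg, hθdef] at hcmp
    have h1' : ((2 : ℚ_[19]) * (s : S15.K).2) ^ 2 = ((1 - 4 * z₂ : ℤ_[19]) : ℚ_[19]) := by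
      have h4 : ((4 : ℤ_[19]) : ℚ_[19]) = 4 := by norm_cast
      push_cast [h4] at hcmp ⊢
      rw [mul_pow, hcmp]
      ring
    exact S15.no_sq 19 (1 - 4 * z₂)
      (by rw [map_sub, map_one, map_mul, map_ofNat, hz₂m]; decide) _ h1'
  have NS3 : ∀ s : S15.Kˣ, ((s : S15.Kˣ) : S15.K) ^ 2 ≠
      (algebraMap ℚ S15.K (2 * (1 / 2)) - θ) * (algebraMap ℚ S15.K (2 * (1 / 8)) - θ) := by
    intro s hs
    have hcmp := congrArg Prod.fst hs
    simp only [Prod.pow_fst, Prod.fst_mul, Prod.fst_sub, S15.fst_alg, hθdef] at hcmp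
    have h1' : ((2 : ℚ_[11]) * (s : S15.K).1) ^ 2 =
        (((1 - z₁) * (1 - 4 * z₁) : ℤ_[11]) : ℚ_[11]) := by
      have h4 : ((4 : ℤ_[11]) : ℚ_[11]) = 4 := by norm_cast
      push_cast [h4] at hcmp ⊢
      rw [mul_pow, hcmp]
      ring
    have hns : ¬ IsSquare (PadicInt.toZMod ((1 - z₁) * (1 - 4 * z₁))) := by
      rw [map_mul, map_sub, map_one, map_sub, map_one, map_mul, map_ofNat, hz₁m]
      decide
    exact S15.no_sq 11 ((1 - z₁) * (1 - 4 * z₁)) hns _ h1'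
  have key := S15.S15x.descent θ hθ h₁ h₂ NS1 NS2 NS3
  intro v₁ v₂ hv
  have hv' : v₁.1 • (WeierstrassCurve.Affine.Point.some _ _ h₁ : S15.Wc.Point) +
      v₁.2 • (WeierstrassCurve.Affine.Point.some _ _ h₂ : S15.Wc.Point) =
      v₂.1 • (WeierstrassCurve.Affine.Point.some _ _ h₁ : S15.Wc.Point) +
      v₂.2 • (WeierstrassCurve.Affine.Point.some _ _ h₂ : S15.Wc.Point) := hv
  have hrel : (v₁.1 - v₂.1) • (WeierstrassCurve.Affine.Point.some _ _ h₁ : S15.Wc.Point) +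
      (v₁.2 - v₂.2) • (WeierstrassCurve.Affine.Point.some _ _ h₂ : S15.Wc.Point) = 0 := by
    rw [sub_zsmul, sub_zsmul]
    rw [show ∀ a b c d : S15.Wc.Point, a + -b + (c + -d) = (a + c) - (b + d) from
      fun a b c d => by abel]
    rw [sub_eq_zero]
    exact hv'
  obtain ⟨hm, hn⟩ := key _ _ hrel
  have : v₁.1 = v₂.1 := by omega
  have : v₁.2 = v₂.2 := by omega
  exact Prod.ext ‹v₁.1 = v₂.1› ‹v₁.2 = v₂.2›
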